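/- Let C be a monoidal groupoid with chosen right duals, let Star(C) and C₀ be the c-groups defined from C, and define r·(x, f) := (r ⊗ (x ⊗ rᘁ), γ_r ≫ (𝟙_r ⊗ (f ⊗ 𝟙_{rᘁ}))) for an object r of C and (x, f) ∈ Star(C), where γ_r := η_r ≫ (𝟙_r ⊗ (λ_{rᘁ})⁻¹) : 𝟙_C ⟶ r ⊗ (𝟙_C ⊗ rᘁ). Then this is an action of the c-group C₀ on the c-group Star(C): r·((x,f) + (y,g)) ∼ r·(x,f) + r·(y,g); (r + r')·(x,f) ∼ r·(r'·(x,f)); 𝟙_C·(x,f) ∼ (x,f); and r·(x,f) ∼ r'·(x',f') whenever r ≅ r' and (x,f) ∼ (x',f'). -/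

import Mathlib

open CategoryTheory MonoidalCategory

/-- The data of a c-group: a relation, an addition, a zero and a negation. -/
structure CGroupData (G : Type*) where
  rel : G → G → Prop
  add : G → G → G
  zero : G
  neg : G → G

variable (C : Type*) [Groupoid C] [MonoidalCategory C] [RightRigidCategory C]

/-- The c-group `C₀` of objects: relation `x ∼ y` iff `x ≅ y`, addition `⊗`,
zero `𝟙_C`, negation `x ↦ xᘁ`. -/
def objectsCGroupData : CGroupData C where
  rel x y := Nonempty (x ≅ y)
  add x y := x ⊗ y
  zero := 𝟙_ C
  neg x := xᘁ

/-- `Star(C)`: pairs `(x, f)` with `f : 𝟙_C ⟶ x`. -/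
abbrev StarC := Σ x : C, (𝟙_ C ⟶ x)

/-- The c-group structure on `Star(C)`. -/
def starCGroupData : CGroupData (StarC C) where
  rel p q := ∃ (θ₀ : 𝟙_ C ≅ 𝟙_ C) (θ₁ : p.1 ≅ q.1), p.2 ≫ θ₁.hom = θ₀.hom ≫ q.2
  add p q := ⟨p.1 ⊗ q.1, (λ_ (𝟙_ C)).inv ≫ (p.2 ⊗ₘ q.2)⟩
  zero := ⟨𝟙_ C, 𝟙 (𝟙_ C)⟩
  neg p := ⟨p.1ᘁ, η_ p.1 (p.1ᘁ) ≫ (Groupoid.inv p.2 ⊗ₘ 𝟙 (p.1ᘁ)) ≫ (λ_ (p.1ᘁ)).hom⟩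

variable {C}

/-- `γ_r := η_r ≫ (𝟙_r ⊗ (λ_{rᘁ})⁻¹) : 𝟙_C ⟶ r ⊗ (𝟙_C ⊗ rᘁ)`. -/
def gammaC (r : C) : 𝟙_ C ⟶ r ⊗ (𝟙_ C ⊗ rᘁ) :=
  η_ r (rᘁ) ≫ (𝟙 r ⊗ₘ (λ_ (rᘁ)).inv)

/-- The action `r·(x, f) := (r ⊗ (x ⊗ rᘁ), γ_r ≫ (𝟙_r ⊗ (f ⊗ 𝟙_{rᘁ})))` of the objects
on `Star(C)`. -/
def actStar (r : C) (p : StarC C) : StarC C :=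
  ⟨r ⊗ (p.1 ⊗ rᘁ), gammaC r ≫ (𝟙 r ⊗ₘ (p.2 ⊗ₘ 𝟙 (rᘁ)))⟩

/-- In a groupoid, any isomorphism of first components gives the `Star(C)` relation. -/
lemma starRel_of_iso (p q : StarC C) (e : p.1 ≅ q.1) : (starCGroupData C).rel p q := by
  refine ⟨asIso (p.2 ≫ e.hom ≫ Groupoid.inv q.2), e, ?_⟩
  simp [Groupoid.inv_eq_inv]

/-- The evaluation as an isomorphism. -/
noncomputable def εI (r : C) : rᘁ ⊗ r ≅ 𝟙_ C := asIso (ε_ r (rᘁ))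

/-- The coevaluation as an isomorphism. -/
noncomputable def ηI (r : C) : 𝟙_ C ≅ r ⊗ rᘁ := asIso (η_ r (rᘁ))

/-- Cancel `rᘁ ⊗ r` on the left. -/
noncomputable def cancelL (r s : C) : rᘁ ⊗ (r ⊗ s) ≅ s :=
  (α_ _ _ _).symm ≪≫ tensorIso (εI r) (Iso.refl s) ≪≫ λ_ s

/-- Any inverse object gives an isomorphism with the chosen dual. -/
noncomputable def dualIso {Z W : C} (h : W ⊗ Z ≅ 𝟙_ C) : Zᘁ ≅ W :=
  (λ_ _).symm ≪≫ tensorIso h.symm (Iso.refl (Zᘁ)) ≪≫ α_ W Z (Zᘁ) ≪≫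
    tensorIso (Iso.refl W) (ηI Z).symm ≪≫ ρ_ W

/-- The formula `r·(x, f)` defines an action of the c-group `C₀` on the c-group
`Star(C)`. -/
theorem actStar_isAction :
    (∀ (r : C) (p q : StarC C),
      (starCGroupData C).rel (actStar r ((starCGroupData C).add p q))
        ((starCGroupData C).add (actStar r p) (actStar r q))) ∧
    (∀ (r r' : C) (p : StarC C),
      (starCGroupData C).rel (actStar ((objectsCGroupData C).add r r') p)
        (actStar r (actStar r' p))) ∧
    (∀ p : StarC C,
      (starCGroupData C).rel (actStar ((objectsCGroupData C).zero) p) p) ∧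
    (∀ (r r' : C) (p p' : StarC C),
      (objectsCGroupData C).rel r r' → (starCGroupData C).rel p p' →
        (starCGroupData C).rel (actStar r p) (actStar r' p')) := by
  refine ⟨?_, ?_, ?_, ?_⟩
  · intro r p q
    exact starRel_of_iso _ _
      ((α_ r (p.1 ⊗ rᘁ) (r ⊗ (q.1 ⊗ rᘁ)) ≪≫ tensorIso (Iso.refl r)
        (α_ p.1 (rᘁ) (r ⊗ (q.1 ⊗ rᘁ)) ≪≫ tensorIso (Iso.refl p.1) (cancelL r (q.1 ⊗ rᘁ)) ≪≫
          (α_ p.1 q.1 (rᘁ)).symm)).symm)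
  · intro r r' p
    refine starRel_of_iso _ _ ?_
    refine tensorIso (Iso.refl (r ⊗ r'))
        (tensorIso (Iso.refl p.1) (dualIso ?_)) ≪≫
      α_ r r' (p.1 ⊗ (r'ᘁ ⊗ rᘁ)) ≪≫
      tensorIso (Iso.refl r) (tensorIso (Iso.refl r') (α_ p.1 (r'ᘁ) (rᘁ)).symm ≪≫
        (α_ r' (p.1 ⊗ r'ᘁ) (rᘁ)).symm)
    exact α_ (r'ᘁ) (rᘁ) (r ⊗ r') ≪≫ tensorIso (Iso.refl (r'ᘁ)) (cancelL r r') ≪≫ εI r'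
  · intro p
    exact starRel_of_iso _ _
      (λ_ _ ≪≫ tensorIso (Iso.refl p.1) (dualIso (λ_ (𝟙_ C))) ≪≫ ρ_ p.1)
  · rintro r r' p p' ⟨e⟩ ⟨θ₀, θ₁, h⟩
    exact starRel_of_iso _ _
      (tensorIso e (tensorIso θ₁
        (dualIso (tensorIso (Iso.refl (r'ᘁ)) e ≪≫ εI r'))))
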